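/- Let λ > 0, C > 0, κ > 0, w_G > 0, w_D > 0, τ > 0, and set A = λ·C and E₁(x) = ∫_x^∞ e^{−t}/t dt for x > 0. Then ∫_0^∞ [ w_D·𝟙{C/x > κ} + w_G·τ·(C/x)·𝟙{C/x ≤ κ} ]·λ·e^{−λx} dx = w_D·(1 − e^{−A/κ}) + w_G·τ·A·E₁(A/κ). -/

import Mathlib

/-- Closed-form constant `λ₁` of the Threshold-based Heuristic policy (Section IV-B) for
Rayleigh fading: with the small-scale channel gain exponentially distributed with density
`λ·e^{−λx}` on `(0,∞)`, inversion power `C/x`, and per-block cost `w_D` if `C/x > κ` and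
`w_G·τ·(C/x)` otherwise, the expected cost equals
`w_D·(1 − e^{−A/κ}) + w_G·τ·A·E₁(A/κ)` with `A = λ·C`. -/
theorem stmt17 (lam C κ wG wD τ : ℝ)
    (hlam : 0 < lam) (hC : 0 < C) (hκ : 0 < κ) (hwG : 0 < wG) (hwD : 0 < wD) (hτ : 0 < τ)
    (A : ℝ) (hA : A = lam * C)
    (E1 : ℝ → ℝ) (hE1 : ∀ x, 0 < x → E1 x = ∫ t in Set.Ioi x, Real.exp (-t) / t) :
    (∫ x in Set.Ioi (0 : ℝ),
        (wD * (if κ < C / x then 1 else 0)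
          + wG * τ * (C / x) * (if C / x ≤ κ then 1 else 0))
        * (lam * Real.exp (-lam * x)))
      = wD * (1 - Real.exp (-A / κ)) + wG * τ * A * E1 (A / κ) := by
  set a : ℝ := C / κ with ha_def
  have ha : 0 < a := div_pos hC hκ
  have hκa : κ * a = C := by rw [ha_def]; field_simp
  set f : ℝ → ℝ := fun x =>
    (wD * (if κ < C / x then 1 else 0)
      + wG * τ * (C / x) * (if C / x ≤ κ then 1 else 0)) * (lam * Real.exp (-lam * x))
    with hf
  -- pointwise identities on the two pieces
  have h1 : ∀ x ∈ Set.Ioo (0 : ℝ) a, f x = wD * (lam * Real.exp (-lam * x)) := by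
    intro x hx
    have hx0 : 0 < x := hx.1
    have hlt : κ < C / x := by
      rw [lt_div_iff₀ hx0, ← hκa]
      exact mul_lt_mul_of_pos_left hx.2 hκ
    simp [hf, hlt, not_le.mpr hlt]
  have h2 : ∀ x ∈ Set.Ioi a, f x = wG * τ * (C / x) * (lam * Real.exp (-lam * x)) := by
    intro x hx
    have hx0 : 0 < x := ha.trans hx
    have hlt : C / x < κ := by
      rw [div_lt_iff₀ hx0, ← hκa]
      exact mul_lt_mul_of_pos_left hx hκ
    simp [hf, not_lt.mpr hlt.le, hlt.le]
  -- integrability on the two pieces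
  have cont1 : Continuous fun x : ℝ => wD * (lam * Real.exp (-lam * x)) := by fun_prop
  have intA : MeasureTheory.IntegrableOn f (Set.Ioc 0 a) := by
    rw [integrableOn_Ioc_iff_integrableOn_Ioo]
    exact ((cont1.integrableOn_Icc).mono_set Set.Ioo_subset_Icc_self).congr_fun (fun x hx => (h1 x hx).symm) measurableSet_Ioo
  have intB : MeasureTheory.IntegrableOn f (Set.Ioi a) := by
    have hbound : MeasureTheory.IntegrableOn
        (fun x : ℝ => wG * τ * κ * (lam * Real.exp (-lam * x))) (Set.Ioi a) := by
      exact ((exp_neg_integrableOn_Ioi a hlam).const_mul lam).const_mul (wG * τ * κ)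
    have hcont : ContinuousOn (fun x : ℝ => wG * τ * (C / x) * (lam * Real.exp (-lam * x)))
        (Set.Ioi a) := by
      apply ContinuousOn.mul _ (by fun_prop)
      apply ContinuousOn.mul continuousOn_const
      exact continuousOn_const.div continuousOn_id (fun x hx => (ha.trans hx).ne')
    have intg2 : MeasureTheory.IntegrableOn
        (fun x : ℝ => wG * τ * (C / x) * (lam * Real.exp (-lam * x))) (Set.Ioi a) := by
      apply MeasureTheory.Integrable.mono' hbound
        (hcont.aestronglyMeasurable measurableSet_Ioi)
      rw [MeasureTheory.ae_restrict_iff' measurableSet_Ioi]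
      filter_upwards with x hx
      have hx0 : 0 < x := ha.trans hx
      have hle : C / x ≤ κ := by
        rw [div_le_iff₀ hx0, ← hκa]
        exact mul_le_mul_of_nonneg_left (le_of_lt hx) hκ.le
      have hpos : 0 ≤ wG * τ * (C / x) * (lam * Real.exp (-lam * x)) := by positivity
      rw [Real.norm_eq_abs, abs_of_nonneg hpos]
      exact mul_le_mul_of_nonneg_right (mul_le_mul_of_nonneg_left hle (by positivity))
        (by positivity)
    exact intg2.congr_fun (fun x hx => (h2 x hx).symm) measurableSet_Ioi
  -- split the integral
  have hsplit : (∫ x in Set.Ioi (0:ℝ), f x)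
      = (∫ x in Set.Ioc 0 a, f x) + ∫ x in Set.Ioi a, f x := by
    rw [← Set.Ioc_union_Ioi_eq_Ioi ha.le]
    exact MeasureTheory.setIntegral_union Set.Ioc_disjoint_Ioi_same measurableSet_Ioi intA intB
  -- first piece
  have hfirst : (∫ x in Set.Ioc 0 a, f x) = wD * (1 - Real.exp (-A / κ)) := by
    rw [MeasureTheory.integral_Ioc_eq_integral_Ioo,
      MeasureTheory.setIntegral_congr_fun measurableSet_Ioo h1,
      ← MeasureTheory.integral_Ioc_eq_integral_Ioo,
      ← intervalIntegral.integral_of_le ha.le]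
    have hderiv : ∀ x ∈ Set.uIcc (0:ℝ) a,
        HasDerivAt (fun y => -(wD * Real.exp (-lam * y))) (wD * (lam * Real.exp (-lam * x))) x := by
      intro x _
      have h0 : HasDerivAt (fun y : ℝ => -lam * y) (-lam) x := by
        simpa using (hasDerivAt_id x).const_mul (-lam)
      have h1 := ((Real.hasDerivAt_exp (-lam * x)).comp x h0).const_mul wD
      have h2 := h1.neg
      exact h2.congr_deriv (by ring)
    rw [intervalIntegral.integral_eq_sub_of_hasDerivAt hderiv
      (cont1.intervalIntegrable 0 a)]
    have : -lam * a = -A / κ := by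
      rw [hA, ha_def]; field_simp
    rw [this]
    simp [mul_comm]
    ring
  -- second piece
  have hAκ : lam * a = A / κ := by rw [hA, ha_def]; field_simp
  have hsecond : (∫ x in Set.Ioi a, f x) = wG * τ * A * E1 (A / κ) := by
    rw [MeasureTheory.setIntegral_congr_fun measurableSet_Ioi h2]
    have hrw : ∀ x ∈ Set.Ioi a,
        wG * τ * (C / x) * (lam * Real.exp (-lam * x))
          = (wG * τ * A * lam) * (Real.exp (-(lam * x)) / (lam * x)) := by
      intro x hx
      have hx0 : (0:ℝ) < x := ha.trans hx
      rw [hA]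
      rw [neg_mul]
      field_simp
    rw [MeasureTheory.setIntegral_congr_fun measurableSet_Ioi hrw,
      MeasureTheory.integral_const_mul,
      MeasureTheory.integral_comp_mul_left_Ioi (fun t => Real.exp (-t) / t) a hlam,
      hAκ, smul_eq_mul, ← hE1 _ (div_pos (hA ▸ mul_pos hlam hC) hκ)]
    field_simp
  rw [show (∫ x in Set.Ioi (0 : ℝ),
        (wD * (if κ < C / x then 1 else 0)
          + wG * τ * (C / x) * (if C / x ≤ κ then 1 else 0))
        * (lam * Real.exp (-lam * x))) = ∫ x in Set.Ioi (0:ℝ), f x from rfl,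
    hsplit, hfirst, hsecond]
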